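/- Let T ⊆ ℤ_{≥0}^n be an arbitrary subset satisfying property (i) (if a, b ∈ ℤ_{≥0}^n with a − b ∈ ℤ_{≥0}^n and a ∈ T, then b ∈ T). Then for two different standard pairs (r, ℓ), (s, m) ∈ B(T), the sets r + ℤ_{≥0}^ℓ and s + ℤ_{≥0}^m are either disjoint, or their intersection equals p + ℤ_{≥0}^{ℓ∩m} for some p ∈ ℤ_{≥0}^n, and in the latter case the inclusions ℓ∩m ⊂ ℓ and ℓ∩m ⊂ m are strict. -/
import Mathlib


open MvPolynomial

def vsupp {n : ℕ} (a : Fin n → ℕ) : Set (Fin n) := {i | a i ≠ 0}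

def vcell {n : ℕ} (l : Set (Fin n)) : Set (Fin n → ℕ) := {a | vsupp a ⊆ l}

def vslice {n : ℕ} (r : Fin n → ℕ) (l : Set (Fin n)) : Set (Fin n → ℕ) :=
  (fun a => r + a) '' vcell l

def IsStdPair {n : ℕ} (T : Set (Fin n → ℕ)) (r : Fin n → ℕ) (l : Set (Fin n)) : Prop :=
  Disjoint (vsupp r) l ∧ vslice r l ⊆ T ∧
    ∀ (r' : Fin n → ℕ) (l' : Set (Fin n)), Disjoint (vsupp r') l' → vslice r' l' ⊆ T →
      vslice r l ⊆ vslice r' l' → vslice r l = vslice r' l'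

def DownClosed {n : ℕ} (T : Set (Fin n → ℕ)) : Prop :=
  ∀ a b : Fin n → ℕ, (∀ i, b i ≤ a i) → a ∈ T → b ∈ T

def vtoZ {n : ℕ} (a : Fin n → ℕ) : Fin n → ℤ := fun i => (a i : ℤ)

def fiber {n : ℕ} (K : AddSubgroup (Fin n → ℤ)) (S : Set (Fin n → ℕ))
    (q : (Fin n → ℤ) ⧸ K) : Set (Fin n → ℕ) :=
  {a ∈ S | (QuotientAddGroup.mk (vtoZ a) : (Fin n → ℤ) ⧸ K) = q}

def PropII {n : ℕ} (K : AddSubgroup (Fin n → ℤ)) (T : Set (Fin n → ℕ)) : Prop :=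
  ∀ (g : Fin n → ℕ) (q : (Fin n → ℤ) ⧸ K),
    ((fun a => g + a) '' fiber K T q) ∩ T = ∅ ∨ ((fun a => g + a) '' fiber K T q) ⊆ T

noncomputable def xmono {n : ℕ} (a : Fin n → ℕ) : MvPolynomial (Fin n) ℂ :=
  monomial (Finsupp.equivFunOnFinite.symm a) 1

def TofI {n : ℕ} (I : Ideal (MvPolynomial (Fin n) ℂ)) : Set (Fin n → ℕ) :=
  {a | xmono a ∉ I}

def IsBinomialIdeal {n : ℕ} (I : Ideal (MvPolynomial (Fin n) ℂ)) : Prop :=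
  ∃ S : Set (MvPolynomial (Fin n) ℂ), I = Ideal.span S ∧
    ∀ f ∈ S, ∃ (a b : Fin n → ℕ) (la lb : ℂ), f = la • xmono a - lb • xmono b

def KofI {n : ℕ} (I : Ideal (MvPolynomial (Fin n) ℂ)) : AddSubgroup (Fin n → ℤ) :=
  AddSubgroup.closure {v | ∃ a ∈ TofI I, ∃ b ∈ TofI I,
    (∃ la lb : ℂ, la ≠ 0 ∧ lb ≠ 0 ∧ la • xmono a - lb • xmono b ∈ I) ∧ v = vtoZ a - vtoZ b}

def IsSaturated {n : ℕ} (I : Ideal (MvPolynomial (Fin n) ℂ)) : Prop :=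
  IsBinomialIdeal I ∧ ∀ a ∈ TofI I, ∀ b ∈ TofI I, vtoZ a - vtoZ b ∈ KofI I →
    ∃ la lb : ℂ, la ≠ 0 ∧ lb ≠ 0 ∧ la • xmono a - lb • xmono b ∈ I

def Tl {n : ℕ} (T : Set (Fin n → ℕ)) (l : Set (Fin n)) : Set (Fin n → ℕ) :=
  {a | ∃ r, IsStdPair T r l ∧ a ∈ vslice r l}

def Tlbar {n : ℕ} (T : Set (Fin n → ℕ)) (l : Set (Fin n)) : Set (Fin n → ℕ) :=
  {a | ∃ r r', (∀ i, r i ≤ r' i) ∧ IsStdPair T r' l ∧ a ∈ vslice r l}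

def IsMonomialIdeal {n : ℕ} (I : Ideal (MvPolynomial (Fin n) ℂ)) : Prop :=
  ∃ S : Set (Fin n → ℕ), I = Ideal.span (xmono '' S)

def wdeg {n d : ℕ} (M : Matrix (Fin d) (Fin n) ℤ) (m : Fin n →₀ ℕ) : Fin d → ℤ :=
  M.mulVec fun i => (m i : ℤ)

noncomputable def homogComp {n d : ℕ} (M : Matrix (Fin d) (Fin n) ℤ) (q : Fin d → ℤ)
    (f : MvPolynomial (Fin n) ℂ) : MvPolynomial (Fin n) ℂ :=
  ∑ m ∈ f.support, if wdeg M m = q then monomial m (f.coeff m) else 0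

noncomputable def degPart {n d : ℕ} (M : Matrix (Fin d) (Fin n) ℤ)
    (I : Ideal (MvPolynomial (Fin n) ℂ)) (q : Fin d → ℤ) :
    Submodule ℂ (MvPolynomial (Fin n) ℂ ⧸ I) :=
  Submodule.span ℂ ((Ideal.Quotient.mk I) '' {f | ∀ m ∈ f.support, wdeg M m = q})

def IsAGraded {n d : ℕ} (M : Matrix (Fin d) (Fin n) ℤ)
    (I : Ideal (MvPolynomial (Fin n) ℂ)) : Prop :=
  (∀ f ∈ I, ∀ q : Fin d → ℤ, homogComp M q f ∈ I) ∧
  ∀ q : Fin d → ℤ,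
    (q ∈ Set.range (fun a : Fin n → ℕ => M.mulVec (vtoZ a)) →
      Module.finrank ℂ (degPart M I q) = 1) ∧
    (q ∉ Set.range (fun a : Fin n → ℕ => M.mulVec (vtoZ a)) →
      Module.finrank ℂ (degPart M I q) = 0)

noncomputable def htI {R : Type*} [CommRing R] (P : Ideal R) : ℕ∞ :=
  ⨆ (h : P.IsPrime), Order.height (⟨P, h⟩ : PrimeSpectrum R)


lemma mem_vslice {n : ℕ} {r x : Fin n → ℕ} {l : Set (Fin n)} :
    x ∈ vslice r l ↔ (∀ i, r i ≤ x i) ∧ ∀ i, i ∉ l → x i = r i := by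
  constructor
  · rintro ⟨a, ha, rfl⟩
    refine ⟨fun i => Nat.le_add_right _ _, fun i hi => ?_⟩
    have h0 : a i = 0 := by
      by_contra h
      exact hi (ha h)
    simp [Pi.add_apply, h0]
  · rintro ⟨h1, h2⟩
    refine ⟨fun i => x i - r i, fun i hi => ?_, ?_⟩
    · by_contra h
      have := h2 i h
      simp only [vsupp, Set.mem_setOf_eq] at hi
      omega
    · funext i
      simp only [Pi.add_apply]
      have := h1 i
      omega

lemma self_mem_vslice {n : ℕ} (r : Fin n → ℕ) (l : Set (Fin n)) : r ∈ vslice r l :=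
  mem_vslice.2 ⟨fun _ => le_rfl, fun _ _ => rfl⟩

lemma vslice_inj {n : ℕ} {r s : Fin n → ℕ} {l m : Set (Fin n)}
    (h : vslice r l = vslice s m) : r = s ∧ l = m := by
  have hrm := mem_vslice.1 (h ▸ self_mem_vslice r l)
  have hsl := mem_vslice.1 (h.symm ▸ self_mem_vslice s m)
  have hrs : r = s := by
    funext i
    exact le_antisymm (hsl.1 i) (hrm.1 i)
  subst hrs
  refine ⟨rfl, ?_⟩
  ext i
  constructor
  · intro hi
    by_contra him
    have hx : (fun j => r j + if j = i then 1 else 0) ∈ vslice r l := by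
      refine mem_vslice.2 ⟨fun j => Nat.le_add_right _ _, fun j hj => ?_⟩
      have : j ≠ i := fun e => hj (e ▸ hi)
      simp [this]
    rw [h] at hx
    have := (mem_vslice.1 hx).2 i him
    simp at this
  · intro hi
    by_contra hil
    have hx : (fun j => r j + if j = i then 1 else 0) ∈ vslice r m := by
      refine mem_vslice.2 ⟨fun j => Nat.le_add_right _ _, fun j hj => ?_⟩
      have : j ≠ i := fun e => hj (e ▸ hi)
      simp [this]
    rw [← h] at hx
    have := (mem_vslice.1 hx).2 i hil
    simp at this

/-- Two different standard pairs are disjoint or intersect in a set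
p + ℤ_{≥0}^{ℓ∩m}, with ℓ∩m strictly contained in both ℓ and m. -/
theorem stmt_11 {n : ℕ} (T : Set (Fin n → ℕ)) (hT : DownClosed T)
    (r s : Fin n → ℕ) (l m : Set (Fin n))
    (hrl : IsStdPair T r l) (hsm : IsStdPair T s m) (hne : (r, l) ≠ (s, m)) :
    vslice r l ∩ vslice s m = ∅ ∨
      ∃ p : Fin n → ℕ, vslice r l ∩ vslice s m = vslice p (l ∩ m) ∧
        l ∩ m ⊂ l ∧ l ∩ m ⊂ m := by
  by_cases hdisj : vslice r l ∩ vslice s m = ∅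
  · exact Or.inl hdisj
  right
  obtain ⟨x, hxl, hxm⟩ : ∃ x, x ∈ vslice r l ∧ x ∈ vslice s m := by
    rcases Set.nonempty_iff_ne_empty.2 hdisj with ⟨x, hx⟩
    exact ⟨x, hx.1, hx.2⟩
  obtain ⟨hxr, hxl2⟩ := mem_vslice.1 hxl
  obtain ⟨hxs, hxm2⟩ := mem_vslice.1 hxm
  -- key: off l, p = r; off m, p = s (where p = max)
  set p : Fin n → ℕ := fun i => max (r i) (s i) with hp
  have hpl : ∀ i, i ∉ l → p i = r i := by
    intro i hi
    have h1 := hxl2 i hi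
    have h2 := hxs i
    simp only [hp]
    omega
  have hpm : ∀ i, i ∉ m → p i = s i := by
    intro i hi
    have h1 := hxm2 i hi
    have h2 := hxr i
    simp only [hp]
    omega
  have heq : vslice r l ∩ vslice s m = vslice p (l ∩ m) := by
    ext y
    constructor
    · rintro ⟨hyl, hym⟩
      obtain ⟨hyr, hyl2⟩ := mem_vslice.1 hyl
      obtain ⟨hys, hym2⟩ := mem_vslice.1 hym
      refine mem_vslice.2 ⟨fun i => max_le (hyr i) (hys i), fun i hi => ?_⟩
      rcases Classical.em (i ∈ l) with hil | hil
      · have him : i ∉ m := fun h => hi ⟨hil, h⟩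
        have := hym2 i him
        have := hys i
        have := hyr i
        simp only [hp]
        omega
      · have := hyl2 i hil
        have := hys i
        simp only [hp]
        omega
    · intro hy
      obtain ⟨hyp, hyp2⟩ := mem_vslice.1 hy
      constructor
      · refine mem_vslice.2 ⟨fun i => le_trans (le_max_left _ _) (hyp i), fun i hi => ?_⟩
        have := hyp2 i (fun h => hi h.1)
        rw [this, hpl i hi]
      · refine mem_vslice.2 ⟨fun i => le_trans (le_max_right _ _) (hyp i), fun i hi => ?_⟩
        have := hyp2 i (fun h => hi h.2)
        rw [this, hpm i hi]
  refine ⟨p, heq, ?_, ?_⟩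
  · refine ⟨Set.inter_subset_left, fun hsub => ?_⟩
    -- then l ⊆ m
    have hlm : l ⊆ m := fun i hi => (hsub hi).2
    -- r ≥ s and r = s off m
    have hrs : ∀ i, s i ≤ r i := by
      intro i
      rcases Classical.em (i ∈ m) with him | him
      · have : s i = 0 := by
          by_contra h
          exact (Set.disjoint_left.1 hsm.1) h him
        omega
      · have h1 := hxm2 i him
        have h2 := hxl2 i (fun h => him (hlm h))
        omega
    have hsub2 : vslice r l ⊆ vslice s m := by
      intro y hy
      obtain ⟨hyr, hyl2⟩ := mem_vslice.1 hy
      refine mem_vslice.2 ⟨fun i => le_trans (hrs i) (hyr i), fun i hi => ?_⟩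
      have h1 := hyl2 i (fun h => hi (hlm h))
      have h2 := hxm2 i hi
      have h3 := hxl2 i (fun h => hi (hlm h))
      omega
    have := hrl.2.2 s m hsm.1 hsm.2.1 hsub2
    obtain ⟨h1, h2⟩ := vslice_inj this
    exact hne (by rw [h1, h2])
  · refine ⟨Set.inter_subset_right, fun hsub => ?_⟩
    have hml : m ⊆ l := fun i hi => (hsub hi).1
    have hsr : ∀ i, r i ≤ s i := by
      intro i
      rcases Classical.em (i ∈ l) with hil | hil
      · have : r i = 0 := by
          by_contra h
          exact (Set.disjoint_left.1 hrl.1) h hil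
        omega
      · have h1 := hxl2 i hil
        have h2 := hxm2 i (fun h => hil (hml h))
        omega
    have hsub2 : vslice s m ⊆ vslice r l := by
      intro y hy
      obtain ⟨hys, hym2⟩ := mem_vslice.1 hy
      refine mem_vslice.2 ⟨fun i => le_trans (hsr i) (hys i), fun i hi => ?_⟩
      have h1 := hym2 i (fun h => hi (hml h))
      have h2 := hxl2 i hi
      have h3 := hxm2 i (fun h => hi (hml h))
      omega
    have := hsm.2.2 r l hrl.1 hrl.2.1 hsub2
    obtain ⟨h1, h2⟩ := vslice_inj this
    exact hne (by rw [h1, h2])
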